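/- Let W be an r × r lower triangular matrix with positive diagonal, Ω = W W^T, ω = v(W*) with W*_{ii} = log(W_{ii}) and W*_{ij} = W_{ij} for i ≠ j, and let D^W be the diagonal matrix of order r(r+1)/2 with diagonal v(J^W), where J^W_{ii} = W_{ii} and off-diagonal entries of J^W equal 1. Let u ∈ ℝ^r have i-th entry r − i + 2, let ν > r − 1 and let S be an r × r symmetric positive definite matrix. Then the gradient with respect to ω of the log induced Wishart prior density log p(ω) = ((ν−r−1)/2) log|Ω| − (1/2) tr(S^{−1} Ω) + Σ_{i=1}^r (r−i+2) log(W_{ii}) + const equals D^W v{ (ν−r−1) W^{−T} − S^{−1} W } + v(diag(u)). -/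

import Mathlib

open Matrix

/-- The continuous linear map `v ↦ a ⬝ᵥ v`. -/
noncomputable def dotCLM {ι : Type*} [Fintype ι] (a : ι → ℝ) : (ι → ℝ) →L[ℝ] ℝ :=
  LinearMap.toContinuousLinearMap
    { toFun := fun v => a ⬝ᵥ v
      map_add' := fun x y => dotProduct_add a x y
      map_smul' := fun c x => by simp [dotProduct_smul] }

/-- Index set of the lower-triangular positions of an `r × r` matrix
(the index set of the half-vectorization `v(·)`). -/
abbrev LTIdx (r : ℕ) := {q : Fin r × Fin r // q.2 ≤ q.1}

/-- The log-Cholesky parametrization `ω ↦ W`: `W` is lower triangular with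
`W_{ii} = exp(ω_{ii})` and `W_{ij} = ω_{ij}` for `j < i`. -/
noncomputable def Wof {r : ℕ} (ω : LTIdx r → ℝ) : Matrix (Fin r) (Fin r) ℝ :=
  fun i j => if h : j ≤ i then
      (if i = j then Real.exp (ω ⟨(i, j), h⟩) else ω ⟨(i, j), h⟩) else 0


lemma dotCLM_apply {ι : Type*} [Fintype ι] (a v : ι → ℝ) : dotCLM a v = a ⬝ᵥ v := rfl

lemma dotCLM_add {ι : Type*} [Fintype ι] (a b : ι → ℝ) :
    dotCLM a + dotCLM b = dotCLM (a + b) := by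
  ext v; simp [dotCLM_apply, add_dotProduct]

lemma dotCLM_smul {ι : Type*} [Fintype ι] (c : ℝ) (a : ι → ℝ) :
    c • dotCLM a = dotCLM (c • a) := by
  ext v; simp [dotCLM_apply, smul_dotProduct]

lemma dotCLM_sum {ι κ : Type*} [Fintype ι] (s : Finset κ) (a : κ → ι → ℝ) :
    ∑ k ∈ s, dotCLM (a k) = dotCLM (∑ k ∈ s, a k) := by
  ext v
  simp only [ContinuousLinearMap.coe_sum', Finset.sum_apply, dotCLM_apply, dotProduct,
    Finset.sum_apply, Finset.sum_mul]
  rw [Finset.sum_comm]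

lemma Wof_lt {r : ℕ} (ω : LTIdx r → ℝ) : (Wof ω).BlockTriangular OrderDual.toDual := by
  intro i j h
  have : ¬ (j ≤ i) := not_le.2 h
  simp [Wof, this]

lemma Wof_diag {r : ℕ} (ω : LTIdx r → ℝ) (i : Fin r) :
    Wof ω i i = Real.exp (ω ⟨(i, i), le_refl i⟩) := by simp [Wof]

lemma Wof_det {r : ℕ} (ω : LTIdx r → ℝ) :
    (Wof ω).det = ∏ i, Real.exp (ω ⟨(i, i), le_refl i⟩) := by
  rw [Matrix.det_of_lowerTriangular _ (Wof_lt ω)]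
  exact Finset.prod_congr rfl fun i _ => Wof_diag ω i

lemma Wof_det_pos {r : ℕ} (ω : LTIdx r → ℝ) : 0 < (Wof ω).det := by
  rw [Wof_det]; exact Finset.prod_pos fun i _ => Real.exp_pos _

lemma dotCLM_zero {ι : Type*} [Fintype ι] : dotCLM (0 : ι → ℝ) = 0 := by
  ext v; simp [dotCLM_apply]

lemma hasFDerivAt_proj {r : ℕ} (q : LTIdx r) (ω0 : LTIdx r → ℝ) :
    HasFDerivAt (fun ω : LTIdx r → ℝ => ω q) (dotCLM (Pi.single q 1)) ω0 := by
  have h := (ContinuousLinearMap.proj (R := ℝ) (φ := fun _ : LTIdx r => ℝ) q).hasFDerivAt (x := ω0)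
  refine h.congr_fderiv ?_
  ext v
  simp [dotCLM_apply, single_dotProduct]

noncomputable def dWc {r : ℕ} (ω0 : LTIdx r → ℝ) (i j : Fin r) : LTIdx r → ℝ :=
  if h : j ≤ i then Pi.single (⟨(i, j), h⟩ : LTIdx r) (if i = j then Wof ω0 i i else 1) else 0

lemma hasFDerivAt_Wentry {r : ℕ} (ω0 : LTIdx r → ℝ) (i j : Fin r) :
    HasFDerivAt (fun ω => Wof ω i j) (dotCLM (dWc ω0 i j)) ω0 := by
  by_cases h : j ≤ i
  · by_cases hij : i = j
    · have heq : (fun ω : LTIdx r → ℝ => Wof ω i j)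
          = fun ω => Real.exp (ω ⟨(i, j), h⟩) := by
        funext ω; simp [Wof, h, hij]
      rw [heq]
      have h1 := (hasFDerivAt_proj ⟨(i, j), h⟩ ω0).exp
      rw [dotCLM_smul] at h1
      refine h1.congr_fderiv (Eq.symm ?_)
      congr 1
      simp only [dWc, dif_pos h, if_pos hij, Wof_diag]
      subst hij
      rw [← Pi.single_smul, smul_eq_mul, mul_one]
    · have heq : (fun ω : LTIdx r → ℝ => Wof ω i j)
          = fun ω => ω ⟨(i, j), h⟩ := by
        funext ω; simp [Wof, h, hij]
      rw [heq]
      have h1 := hasFDerivAt_proj ⟨(i, j), h⟩ ω0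
      convert h1 using 2
      simp [dWc, h, hij]
  · have heq : (fun ω : LTIdx r → ℝ => Wof ω i j) = fun _ => (0 : ℝ) := by
      funext ω; simp [Wof, h]
    rw [heq, dWc, dif_neg h, dotCLM_zero]
    exact hasFDerivAt_const _ _

lemma Wof_isUnit_det {r : ℕ} (ω : LTIdx r → ℝ) : IsUnit (Wof ω).det :=
  (Wof_det_pos ω).ne'.isUnit

lemma Wof_zero_of_lt {r : ℕ} (ω : LTIdx r → ℝ) {i j : Fin r} (h : i < j) : Wof ω i j = 0 := by
  simp [Wof, not_le.2 h]

lemma Winv_upper {r : ℕ} (ω : LTIdx r → ℝ) {i j : Fin r} (h : i < j) : (Wof ω)⁻¹ i j = 0 := by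
  have : Invertible (Wof ω) := (Wof ω).invertibleOfIsUnitDet (Wof_isUnit_det ω)
  exact blockTriangular_inv_of_blockTriangular (Wof_lt ω)
    (by simpa using h : OrderDual.toDual j < OrderDual.toDual i)

lemma Winv_diag_mul {r : ℕ} (ω : LTIdx r → ℝ) (i : Fin r) :
    Wof ω i i * (Wof ω)⁻¹ i i = 1 := by
  have h1 : Wof ω * (Wof ω)⁻¹ = 1 := Matrix.mul_nonsing_inv _ (Wof_isUnit_det ω)
  have h2 := congrFun (congrFun h1 i) i
  rw [Matrix.mul_apply, Finset.sum_eq_single i] at h2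
  · simpa using h2
  · intro k _ hk
    rcases lt_or_gt_of_ne hk with hlt | hgt
    · rw [Winv_upper ω hlt, mul_zero]
    · rw [Wof_zero_of_lt ω hgt, zero_mul]
  · intro h; exact absurd (Finset.mem_univ i) h

lemma dWc_apply {r : ℕ} (ω0 : LTIdx r → ℝ) (a b i j : Fin r) (hji : j ≤ i) :
    dWc ω0 a b ⟨(i, j), hji⟩
      = if a = i ∧ b = j then (if i = j then Wof ω0 i i else 1) else 0 := by
  unfold dWc
  by_cases h : b ≤ a
  · rw [dif_pos h, Pi.single_apply]
    by_cases hab : a = i ∧ b = j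
    · obtain ⟨ha, hb⟩ := hab
      subst ha; subst hb
      simp
    · rw [if_neg hab, if_neg]
      intro hq
      apply hab
      have := congrArg Subtype.val hq
      simp at this
      exact ⟨this.1.symm, this.2.symm⟩
  · rw [dif_neg h]
    rw [if_neg, Pi.zero_apply]
    rintro ⟨ha, hb⟩
    subst ha; subst hb
    exact h hji

lemma dotCLM_sub {ι : Type*} [Fintype ι] (a b : ι → ℝ) :
    dotCLM a - dotCLM b = dotCLM (a - b) := by
  ext v; simp [dotCLM_apply, sub_dotProduct]

lemma sum_single_diag_apply {r : ℕ} (f : Fin r → ℝ) (i j : Fin r) (hji : j ≤ i) :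
    (∑ k : Fin r, (f k) • (Pi.single (⟨(k, k), le_refl k⟩ : LTIdx r) (1 : ℝ) : LTIdx r → ℝ)) ⟨(i, j), hji⟩
      = if i = j then f i else 0 := by
  rw [Finset.sum_apply]
  by_cases hij : i = j
  · subst hij
    rw [if_pos rfl, Finset.sum_eq_single i]
    · simp
    · intro k _ hk
      have : (⟨(i, i), hji⟩ : LTIdx r) ≠ ⟨(k, k), le_refl k⟩ := by
        intro h
        exact hk ((congrArg (fun q : LTIdx r => q.1.1) h)).symm
      simp [Pi.single_apply, this]
    · intro h; exact absurd (Finset.mem_univ i) h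
  · rw [if_neg hij, Finset.sum_eq_zero]
    intro k _
    have : (⟨(i, j), hji⟩ : LTIdx r) ≠ ⟨(k, k), le_refl k⟩ := by
      intro h
      have h1 := congrArg (fun q : LTIdx r => q.1.1) h
      have h2 := congrArg (fun q : LTIdx r => q.1.2) h
      exact hij (h1.trans h2.symm)
    simp [Pi.single_apply, this]

lemma aB_apply {r : ℕ} (ω0 : LTIdx r → ℝ) (S : Matrix (Fin r) (Fin r) ℝ)
    (hSinv : ∀ a b, S⁻¹ a b = S⁻¹ b a) (i j : Fin r) (hji : j ≤ i) :
    (∑ p : Fin r × Fin r × Fin r,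
        S⁻¹ p.1 p.2.1 • (Wof ω0 p.2.1 p.2.2 • dWc ω0 p.1 p.2.2
          + Wof ω0 p.1 p.2.2 • dWc ω0 p.2.1 p.2.2)) ⟨(i, j), hji⟩
      = 2 * ((if i = j then Wof ω0 i i else 1) * (S⁻¹ * Wof ω0) i j) := by
  rw [Finset.sum_apply]
  simp only [Pi.smul_apply, Pi.add_apply, smul_eq_mul, dWc_apply _ _ _ _ _ hji]
  set D := if i = j then Wof ω0 i i else 1 with hD
  rw [Fintype.sum_prod_type]
  simp only [Fintype.sum_prod_type]
  simp only [mul_ite, mul_zero, mul_add, ite_and]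
  simp only [Finset.sum_ite_eq, Finset.sum_ite_eq', Finset.mem_univ, if_true,
    Finset.sum_ite_irrel, Finset.sum_const_zero, Finset.sum_add_distrib]
  have h2 : ∑ x : Fin r, S⁻¹ x i * (Wof ω0 x j * D) = ∑ x : Fin r, S⁻¹ i x * (Wof ω0 x j * D) :=
    Finset.sum_congr rfl fun x _ => by rw [hSinv x i]
  have h3 : D * ∑ x : Fin r, S⁻¹ i x * Wof ω0 x j
      = ∑ x : Fin r, S⁻¹ i x * (Wof ω0 x j * D) := by
    rw [Finset.mul_sum]
    exact Finset.sum_congr rfl fun x _ => by ring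
  rw [h2, ← two_mul, Matrix.mul_apply, h3]

/-- **Gradient of the log induced Wishart prior density in the log-Cholesky
parametrization.** With `Ω = WWᵀ`, `ν > r − 1`, `S` symmetric positive definite, and
`u_i = r − i + 2` (for `i = 1, …, r`; here `u j = r − j + 1` for the 0-based index `j`),
the gradient with respect to `ω` of
`log p(ω) = ((ν−r−1)/2) log|Ω| − (1/2) tr(S⁻¹Ω) + Σᵢ (r−i+2) log W_{ii} + const`
equals `D^W v{(ν−r−1) W^{−T} − S⁻¹ W} + v(diag u)`. -/
theorem gradient_log_wishart_prior_logCholesky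
    (r : ℕ) (ν : ℝ) (hν : (r : ℝ) - 1 < ν)
    (S : Matrix (Fin r) (Fin r) ℝ) (hSsym : Sᵀ = S) (hS : S.PosDef)
    (c : ℝ) (ω0 : LTIdx r → ℝ) :
    HasFDerivAt
      (fun ω : LTIdx r → ℝ =>
        ((ν - r - 1) / 2) * Real.log ((Wof ω * (Wof ω)ᵀ).det)
          - (1 / 2) * (S⁻¹ * (Wof ω * (Wof ω)ᵀ)).trace
          + ∑ j : Fin r, ((r : ℝ) - (j : ℕ) + 1) * Real.log (Wof ω j j)
          + c)
      (dotCLM (fun q : LTIdx r =>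
        (if q.1.1 = q.1.2 then Wof ω0 q.1.1 q.1.1 else 1) *
            (((ν - r - 1) • ((Wof ω0)⁻¹)ᵀ - S⁻¹ * Wof ω0) q.1.1 q.1.2)
          + (if q.1.1 = q.1.2 then (r : ℝ) - (q.1.1 : ℕ) + 1 else 0)))
      ω0 := by
  have hSinv : ∀ a b, S⁻¹ a b = S⁻¹ b a := by
    intro a b
    have h : (S⁻¹)ᵀ = S⁻¹ := by rw [Matrix.transpose_nonsing_inv, hSsym]
    exact (congrFun (congrFun h a) b).symm
  have heq : (fun ω : LTIdx r → ℝ =>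
        ((ν - r - 1) / 2) * Real.log ((Wof ω * (Wof ω)ᵀ).det)
          - (1 / 2) * (S⁻¹ * (Wof ω * (Wof ω)ᵀ)).trace
          + ∑ j : Fin r, ((r : ℝ) - (j : ℕ) + 1) * Real.log (Wof ω j j)
          + c)
      = fun ω : LTIdx r → ℝ =>
        (∑ i : Fin r, (ν - r - 1) * ω ⟨(i, i), le_refl i⟩)
          - (1 / 2) * (∑ p : Fin r × Fin r × Fin r,
              S⁻¹ p.1 p.2.1 * (Wof ω p.2.1 p.2.2 * Wof ω p.1 p.2.2))
          + (∑ j : Fin r, ((r : ℝ) - (j : ℕ) + 1) * ω ⟨(j, j), le_refl j⟩)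
          + c := by
    funext ω
    have h1 : ((ν - r - 1) / 2) * Real.log ((Wof ω * (Wof ω)ᵀ).det)
        = ∑ i : Fin r, (ν - r - 1) * ω ⟨(i, i), le_refl i⟩ := by
      rw [Matrix.det_mul, Matrix.det_transpose, Wof_det, ← Real.exp_sum, ← Real.exp_add,
        Real.log_exp, ← Finset.sum_add_distrib, Finset.mul_sum]
      exact Finset.sum_congr rfl fun i _ => by ring
    have h2 : (S⁻¹ * (Wof ω * (Wof ω)ᵀ)).trace
        = ∑ p : Fin r × Fin r × Fin r,
            S⁻¹ p.1 p.2.1 * (Wof ω p.2.1 p.2.2 * Wof ω p.1 p.2.2) := by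
      simp [Matrix.trace, Matrix.diag, Matrix.mul_apply, Matrix.transpose_apply,
        Finset.mul_sum, Fintype.sum_prod_type]
    have h3 : ∀ j : Fin r, Real.log (Wof ω j j) = ω ⟨(j, j), le_refl j⟩ := by
      intro j; rw [Wof_diag, Real.log_exp]
    rw [h1, h2]
    simp_rw [h3]
  rw [heq]
  have hA : HasFDerivAt
      (fun ω : LTIdx r → ℝ => ∑ i : Fin r, (ν - r - 1) * ω ⟨(i, i), le_refl i⟩)
      (dotCLM (∑ i : Fin r,
        (ν - r - 1) • (Pi.single (⟨(i, i), le_refl i⟩ : LTIdx r) (1 : ℝ) : LTIdx r → ℝ))) ω0 := by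
    rw [← dotCLM_sum]
    refine HasFDerivAt.fun_sum fun i _ => ?_
    rw [← dotCLM_smul]
    exact (hasFDerivAt_proj _ ω0).const_mul _
  have hC : HasFDerivAt
      (fun ω : LTIdx r → ℝ => ∑ j : Fin r, ((r : ℝ) - (j : ℕ) + 1) * ω ⟨(j, j), le_refl j⟩)
      (dotCLM (∑ j : Fin r,
        ((r : ℝ) - (j : ℕ) + 1) • (Pi.single (⟨(j, j), le_refl j⟩ : LTIdx r) (1 : ℝ) : LTIdx r → ℝ))) ω0 := by
    rw [← dotCLM_sum]
    refine HasFDerivAt.fun_sum fun j _ => ?_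
    rw [← dotCLM_smul]
    exact (hasFDerivAt_proj _ ω0).const_mul _
  have hB : HasFDerivAt
      (fun ω : LTIdx r → ℝ => ∑ p : Fin r × Fin r × Fin r,
          S⁻¹ p.1 p.2.1 * (Wof ω p.2.1 p.2.2 * Wof ω p.1 p.2.2))
      (dotCLM (∑ p : Fin r × Fin r × Fin r,
          S⁻¹ p.1 p.2.1 • (Wof ω0 p.2.1 p.2.2 • dWc ω0 p.1 p.2.2
            + Wof ω0 p.1 p.2.2 • dWc ω0 p.2.1 p.2.2))) ω0 := by
    rw [← dotCLM_sum]
    refine HasFDerivAt.fun_sum fun p _ => ?_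
    rw [← dotCLM_smul, ← dotCLM_add, ← dotCLM_smul, ← dotCLM_smul]
    exact ((hasFDerivAt_Wentry ω0 p.2.1 p.2.2).mul (hasFDerivAt_Wentry ω0 p.1 p.2.2)).const_mul _
  have hg := ((hA.sub (hB.const_mul ((1 : ℝ)/2))).add hC).add_const c
  rw [dotCLM_smul, dotCLM_sub, dotCLM_add] at hg
  refine hg.congr_fderiv (Eq.symm ?_)
  congr 1
  funext q
  obtain ⟨⟨i, j⟩, hji⟩ := q
  simp only [Pi.add_apply, Pi.sub_apply, Pi.smul_apply, smul_eq_mul]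
  rw [sum_single_diag_apply, sum_single_diag_apply, aB_apply ω0 S hSinv i j hji]
  simp only [Matrix.sub_apply, Matrix.smul_apply, Matrix.transpose_apply, smul_eq_mul]
  by_cases hij : i = j
  · subst hij
    have hd := Winv_diag_mul ω0 i
    simp only [eq_self_iff_true, if_true]
    linear_combination (ν - (r : ℝ) - 1) * hd
  · have hji' : j < i := lt_of_le_of_ne hji (fun h => hij h.symm)
    rw [Winv_upper ω0 hji']
    simp only [if_neg hij]
    ring
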